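/- Under the assumptions that q is continuously differentiable near x*, r(x*) = 0, and r'(x*) is invertible, the AA(1) map Ψ is locally Lipschitz at z* = (x*, x*): there exist δ > 0 and L > 0 such that ‖Ψ(z* + d) - Ψ(z*)‖ ≤ L‖d‖ for all d ∈ ℝ²ⁿ with ‖d‖ < δ. Moreover one may take L = 3 + (4 + 4/c_r)‖r'(x*)‖, where c_r > 0 is any constant with c_r² ≤ λ_min(r'(x)ᵀ r'(x)) for all x near x*. -/

import Mathlib

open scoped RealInnerProductSpace Topology
open Filter

noncomputable section

abbrev E (n : ℕ) := EuclideanSpace ℝ (Fin n)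

/-- The residual `r(x) = x - q(x)`. -/
def rr {n : ℕ} (q : E n → E n) (x : E n) : E n := x - q x

open Classical in
/-- The AA(1) coefficient `β(x,y)`. -/
def beta {n : ℕ} (q : E n → E n) (p : E n × E n) : ℝ :=
  if rr q p.1 = rr q p.2 then 0
  else -⟪rr q p.1, rr q p.1 - rr q p.2⟫ / ‖rr q p.1 - rr q p.2‖ ^ 2

/-- The AA(1) fixed-point iteration map `Ψ(x,y) = (q(x) + β(x,y)(q(x)-q(y)), x)`. -/
def Psi {n : ℕ} (q : E n → E n) (p : E n × E n) : E n × E n :=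
  (q p.1 + beta q p • (q p.1 - q p.2), p.1)

/-- Euclidean norm on the product `ℝⁿ × ℝⁿ ≅ ℝ²ⁿ`. -/
def pnorm {n : ℕ} (p : E n × E n) : ℝ := Real.sqrt (‖p.1‖ ^ 2 + ‖p.2‖ ^ 2)


lemma pnorm_nonneg {n : ℕ} (p : E n × E n) : 0 ≤ pnorm p := Real.sqrt_nonneg _

lemma fst_le_pnorm {n : ℕ} (p : E n × E n) : ‖p.1‖ ≤ pnorm p := by
  have h : ‖p.1‖ = Real.sqrt (‖p.1‖ ^ 2) := (Real.sqrt_sq (norm_nonneg _)).symm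
  rw [h, pnorm]
  exact Real.sqrt_le_sqrt (by nlinarith [sq_nonneg ‖p.2‖])

lemma pnorm_le_add {n : ℕ} (p : E n × E n) : pnorm p ≤ ‖p.1‖ + ‖p.2‖ := by
  rw [pnorm]
  have h : ‖p.1‖ ^ 2 + ‖p.2‖ ^ 2 ≤ (‖p.1‖ + ‖p.2‖) ^ 2 := by
    nlinarith [norm_nonneg p.1, norm_nonneg p.2]
  calc Real.sqrt (‖p.1‖ ^ 2 + ‖p.2‖ ^ 2) ≤ Real.sqrt ((‖p.1‖ + ‖p.2‖) ^ 2) :=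
        Real.sqrt_le_sqrt h
    _ = ‖p.1‖ + ‖p.2‖ := Real.sqrt_sq (by positivity)

set_option maxHeartbeats 1000000 in
/-- local Lipschitz continuity of the AA(1) map `Ψ` at `z* = (x*,x*)` in the
nonlinear case, with constant `L = 3 + (4 + 4/c_r)‖r'(x*)‖`, where `c_r > 0` is a uniform
lower bound on the singular values of `r'(x)` near `x*`
(i.e. `c_r² ≤ λ_min(r'(x)ᵀ r'(x))`, equivalently `c_r‖v‖ ≤ ‖r'(x)v‖`). -/
theorem stmt4 {n : ℕ} (q : E n → E n) (xs : E n) (hq : ContDiffAt ℝ 1 q xs)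
    (hfix : q xs = xs)
    (hinv : Function.Bijective (fderiv ℝ (rr q) xs))
    (cr : ℝ) (hcr : 0 < cr)
    (hlow : ∀ᶠ x in 𝓝 xs, ∀ v : E n, cr * ‖v‖ ≤ ‖fderiv ℝ (rr q) x v‖) :
    ∃ δ > 0, ∀ d : E n × E n, pnorm d < δ →
      pnorm (Psi q ((xs, xs) + d) - Psi q (xs, xs)) ≤
        (3 + (4 + 4 / cr) * ‖fderiv ℝ (rr q) xs‖) * pnorm d := by
  classical
  have hrfun : rr q = fun x => x - q x := rfl
  have hr : ContDiffAt ℝ 1 (rr q) xs := by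
    rw [hrfun]; exact contDiffAt_id.sub hq
  set A := fderiv ℝ (rr q) xs with hA
  set N := ‖A‖ with hN
  have hN0 : 0 ≤ N := norm_nonneg _
  have hAlow : ∀ v : E n, cr * ‖v‖ ≤ ‖A v‖ := hlow.self_of_nhds
  set ε := cr / (2 * (cr + 1)) with hε
  have hε0 : 0 < ε := by positivity
  have hεcr : ε ≤ cr / 2 := by
    rw [hε, div_le_div_iff₀ (by positivity) (by norm_num)]
    nlinarith
  have hcε : 0 < cr - ε := by linarith
  clear_value A N ε
  -- neighborhood where q is C¹
  obtain ⟨u, hu, hcd⟩ := hr.contDiffOn le_rfl (by simp)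
  obtain ⟨t, htu, ht_open, hxt⟩ := mem_nhds_iff.mp hu
  have hcdt : ContDiffOn ℝ 1 (rr q) t := hcd.mono htu
  have hcont : ContinuousOn (fderiv ℝ (rr q)) t :=
    hcdt.continuousOn_fderiv_of_isOpen ht_open le_rfl
  have hcont_at : ContinuousAt (fderiv ℝ (rr q)) xs :=
    hcont.continuousAt (ht_open.mem_nhds hxt)
  have hev : ∀ᶠ x in 𝓝 xs, ‖fderiv ℝ (rr q) x - A‖ < ε := by
    have h1 : ∀ᶠ x in 𝓝 xs, fderiv ℝ (rr q) x ∈ Metric.ball A ε :=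
      hcont_at (by rw [hA]; exact Metric.ball_mem_nhds _ hε0)
    filter_upwards [h1] with x hx
    rwa [Metric.mem_ball, dist_eq_norm] at hx
  have hev2 : ∀ᶠ x in 𝓝 xs, x ∈ t := ht_open.mem_nhds hxt
  obtain ⟨ρ, hρ0, hball⟩ := Metric.eventually_nhds_iff_ball.mp (hev.and hev2)
  set S := Metric.ball xs ρ with hS
  have hSsub : ∀ x ∈ S, ‖fderiv ℝ (rr q) x - A‖ < ε ∧ x ∈ t := fun x hx => hball x hx
  have hdiff : ∀ x ∈ S, DifferentiableAt ℝ (rr q) x := by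
    intro x hx
    have hxt' := (hSsub x hx).2
    exact (hcdt.differentiableOn one_ne_zero).differentiableAt (ht_open.mem_nhds hxt')
  have hub : ∀ x ∈ S, ‖fderiv ℝ (rr q) x‖ ≤ N + ε := by
    intro x hx
    calc ‖fderiv ℝ (rr q) x‖ = ‖(fderiv ℝ (rr q) x - A) + A‖ := by rw [sub_add_cancel]
      _ ≤ ‖fderiv ℝ (rr q) x - A‖ + ‖A‖ := norm_add_le _ _
      _ ≤ ε + N := by have := (hSsub x hx).1; linarith [le_of_lt this]
      _ = N + ε := by ring
  have hlip : ∀ a ∈ S, ∀ b ∈ S, ‖rr q a - rr q b‖ ≤ (N + ε) * ‖a - b‖ := by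
    intro a ha b hb
    exact Convex.norm_image_sub_le_of_norm_fderiv_le hdiff hub (convex_ball xs ρ) hb ha
  -- lower bound
  have hlower : ∀ a ∈ S, ∀ b ∈ S, (cr - ε) * ‖a - b‖ ≤ ‖rr q a - rr q b‖ := by
    intro a ha b hb
    set g := fun x : E n => rr q x - A x with hg
    have hgdiff : ∀ x ∈ S, DifferentiableAt ℝ g x := fun x hx =>
      (hdiff x hx).sub (A.differentiableAt)
    have hgfd : ∀ x ∈ S, fderiv ℝ g x = fderiv ℝ (rr q) x - A := by
      intro x hx
      rw [hg, fderiv_fun_sub (hdiff x hx) A.differentiableAt, A.fderiv]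
    have hgub : ∀ x ∈ S, ‖fderiv ℝ g x‖ ≤ ε := by
      intro x hx; rw [hgfd x hx]; exact le_of_lt (hSsub x hx).1
    have hmvt : ‖g a - g b‖ ≤ ε * ‖a - b‖ :=
      Convex.norm_image_sub_le_of_norm_fderiv_le hgdiff hgub (convex_ball xs ρ) hb ha
    have hgab : g a - g b = (rr q a - rr q b) - A (a - b) := by
      simp only [hg, map_sub]; abel
    have h1 : cr * ‖a - b‖ ≤ ‖A (a - b)‖ := hAlow _
    have h2 : ‖A (a - b)‖ ≤ ‖rr q a - rr q b‖ + ε * ‖a - b‖ := by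
      have hid : A (a - b) = (rr q a - rr q b) - (g a - g b) := by
        rw [hgab]; abel
      calc ‖A (a - b)‖ = ‖(rr q a - rr q b) - (g a - g b)‖ := by rw [hid]
        _ ≤ ‖rr q a - rr q b‖ + ‖g a - g b‖ := norm_sub_le _ _
        _ ≤ ‖rr q a - rr q b‖ + ε * ‖a - b‖ := by linarith
    nlinarith [norm_nonneg (a - b)]
  have hrxs : rr q xs = 0 := by rw [hrfun]; simp [hfix]
  set M := N + ε with hM
  have hM0 : 0 < M := by positivity
  clear_value M
  refine ⟨ρ, hρ0, ?_⟩
  intro d hd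
  set a := xs + d.1 with ha
  set b := xs + d.2 with hb
  have hd1 : ‖d.1‖ ≤ pnorm d := fst_le_pnorm d
  have haS : a ∈ S := by
    rw [hS, Metric.mem_ball, dist_eq_norm, ha]
    simpa using lt_of_le_of_lt hd1 hd
  have hd2 : ‖d.2‖ ≤ pnorm d := by
    have h : ‖d.2‖ = Real.sqrt (‖d.2‖ ^ 2) := (Real.sqrt_sq (norm_nonneg _)).symm
    rw [h, pnorm]
    exact Real.sqrt_le_sqrt (by nlinarith [sq_nonneg ‖d.1‖])
  have hbS : b ∈ S := by
    rw [hS, Metric.mem_ball, dist_eq_norm, hb]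
    simpa using lt_of_le_of_lt hd2 hd
  have hra : ‖rr q a‖ ≤ M * ‖d.1‖ := by
    have h := hlip a haS xs (by simp [hS, Metric.mem_ball, hρ0])
    rw [hrxs, sub_zero] at h
    simpa [ha] using h
  -- components
  have hfst : ((xs, xs) + d).1 = a := rfl
  have hsnd : ((xs, xs) + d).2 = b := rfl
  have hPsixs : Psi q (xs, xs) = (xs, xs) := by
    simp [Psi, hfix, sub_self, smul_zero]
  set β := beta q ((xs, xs) + d) with hβ
  have hdiffp : Psi q ((xs, xs) + d) - Psi q (xs, xs) =
      (q a + β • (q a - q b) - xs, d.1) := by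
    rw [hPsixs]
    simp only [Psi, hfst, hsnd, Prod.mk_sub_mk]
    congr 1
    rw [ha]; abel
  -- key identity for first component
  have hqa : q a = a - rr q a := by rw [hrfun]; simp
  have hqb : q b = b - rr q b := by rw [hrfun]; simp
  have hfirst : q a + β • (q a - q b) - xs
      = (d.1 - rr q a) + (β • (d.1 - d.2) - β • (rr q a - rr q b)) := by
    have hab : a - b = d.1 - d.2 := by rw [ha, hb]; abel
    have : q a - q b = (d.1 - d.2) - (rr q a - rr q b) := by
      rw [hqa, hqb, ← hab]; abel
    rw [this, hqa, smul_sub, ha]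
    abel
  -- bound on |β| terms
  have hbound : |β| * ‖d.1 - d.2‖ + |β| * ‖rr q a - rr q b‖ ≤ M * ‖d.1‖ / (cr - ε) + M * ‖d.1‖ := by
    by_cases hrab : rr q a = rr q b
    · have : β = 0 := by
        rw [hβ, beta]; simp only [hfst, hsnd]; rw [if_pos hrab]
      rw [this]
      simp only [abs_zero, zero_mul, add_zero]
      positivity
    · have hβval : β = -⟪rr q a, rr q a - rr q b⟫ / ‖rr q a - rr q b‖ ^ 2 := by
        rw [hβ, beta]; simp only [hfst, hsnd]; rw [if_neg hrab]
      have hrabpos : 0 < ‖rr q a - rr q b‖ := by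
        rw [norm_pos_iff]; exact sub_ne_zero_of_ne hrab
      have habne : d.1 ≠ d.2 := by
        intro h
        apply hrab
        have : a = b := by rw [ha, hb, h]
        rw [this]
      have habpos : 0 < ‖d.1 - d.2‖ := by
        rw [norm_pos_iff]; exact sub_ne_zero_of_ne habne
      have hβle : |β| ≤ ‖rr q a‖ / ‖rr q a - rr q b‖ := by
        rw [hβval, abs_div, abs_neg]
        rw [div_le_div_iff₀ (by positivity) hrabpos]
        have h1 : |⟪rr q a, rr q a - rr q b⟫| ≤ ‖rr q a‖ * ‖rr q a - rr q b‖ :=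
          abs_real_inner_le_norm _ _
        have h2 : |‖rr q a - rr q b‖ ^ 2| = ‖rr q a - rr q b‖ ^ 2 := abs_of_nonneg (by positivity)
        rw [h2]
        nlinarith [norm_nonneg (rr q a)]
      have hlo : (cr - ε) * ‖d.1 - d.2‖ ≤ ‖rr q a - rr q b‖ := by
        have h := hlower a haS b hbS
        have hab : a - b = d.1 - d.2 := by rw [ha, hb]; abel
        rwa [hab] at h
      have t1 : |β| * ‖rr q a - rr q b‖ ≤ M * ‖d.1‖ := by
        calc |β| * ‖rr q a - rr q b‖ ≤ (‖rr q a‖ / ‖rr q a - rr q b‖) * ‖rr q a - rr q b‖ :=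
              mul_le_mul_of_nonneg_right hβle (norm_nonneg _)
          _ = ‖rr q a‖ := div_mul_cancel₀ _ (ne_of_gt hrabpos)
          _ ≤ M * ‖d.1‖ := hra
      have t2 : |β| * ‖d.1 - d.2‖ ≤ M * ‖d.1‖ / (cr - ε) := by
        calc |β| * ‖d.1 - d.2‖ ≤ (‖rr q a‖ / ‖rr q a - rr q b‖) * ‖d.1 - d.2‖ :=
              mul_le_mul_of_nonneg_right hβle (norm_nonneg _)
          _ ≤ M * ‖d.1‖ / (cr - ε) := by
              rw [div_mul_eq_mul_div, div_le_div_iff₀ hrabpos hcε]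
              have h3 : ‖rr q a‖ * ((cr - ε) * ‖d.1 - d.2‖) ≤ ‖rr q a‖ * ‖rr q a - rr q b‖ :=
                mul_le_mul_of_nonneg_left hlo (norm_nonneg _)
              nlinarith [norm_nonneg (rr q a), hra, norm_nonneg (rr q a - rr q b)]
      linarith
  -- norm of first component
  have hfn : ‖q a + β • (q a - q b) - xs‖ ≤ ‖d.1‖ + M * ‖d.1‖ + (M * ‖d.1‖ / (cr - ε) + M * ‖d.1‖) := by
    rw [hfirst]
    calc ‖(d.1 - rr q a) + (β • (d.1 - d.2) - β • (rr q a - rr q b))‖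
        ≤ ‖d.1 - rr q a‖ + ‖β • (d.1 - d.2) - β • (rr q a - rr q b)‖ := norm_add_le _ _
      _ ≤ (‖d.1‖ + ‖rr q a‖) + (‖β • (d.1 - d.2)‖ + ‖β • (rr q a - rr q b)‖) := by
          gcongr <;> [exact norm_sub_le _ _; exact norm_sub_le _ _]
      _ = (‖d.1‖ + ‖rr q a‖) + (|β| * ‖d.1 - d.2‖ + |β| * ‖rr q a - rr q b‖) := by
          rw [norm_smul, norm_smul, Real.norm_eq_abs]
      _ ≤ ‖d.1‖ + M * ‖d.1‖ + (M * ‖d.1‖ / (cr - ε) + M * ‖d.1‖) := by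
          have := hbound; linarith [hra]
  -- put together
  set C := 2 + 2 * M + M / (cr - ε) with hC
  have hfinal : pnorm (Psi q ((xs, xs) + d) - Psi q (xs, xs)) ≤ C * ‖d.1‖ := by
    rw [hdiffp]
    calc pnorm (q a + β • (q a - q b) - xs, d.1)
        ≤ ‖q a + β • (q a - q b) - xs‖ + ‖d.1‖ := pnorm_le_add _
      _ ≤ C * ‖d.1‖ := by
          rw [hC]
          have h := hfn
          have h4 : M * ‖d.1‖ / (cr - ε) = (M / (cr - ε)) * ‖d.1‖ := by ring
          rw [h4] at h
          linarith
  have hCL : C ≤ 3 + (4 + 4 / cr) * N := by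
    have h1 : (N + ε) / (cr - ε) ≤ (2 * N + 2 * ε) / cr := by
      rw [div_le_div_iff₀ hcε hcr]
      nlinarith [mul_nonneg (by linarith : (0:ℝ) ≤ N + ε) (by linarith : (0:ℝ) ≤ cr - 2 * ε)]
    have h4 : 2 * ε + 2 * (ε / cr) = 1 := by
      rw [hε]; field_simp
    have h5 : (2 * N + 2 * ε) / cr = 2 * (N / cr) + 2 * (ε / cr) := by ring
    have h6 : (4 + 4 / cr) * N = 4 * N + 4 * (N / cr) := by ring
    have h7 : 0 ≤ N / cr := div_nonneg hN0 hcr.le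
    rw [hC, hM, h6]
    rw [h5] at h1
    linarith
  calc pnorm (Psi q ((xs, xs) + d) - Psi q (xs, xs)) ≤ C * ‖d.1‖ := hfinal
    _ ≤ C * pnorm d := by
        apply mul_le_mul_of_nonneg_left hd1
        rw [hC]; positivity
    _ ≤ (3 + (4 + 4 / cr) * N) * pnorm d :=
        mul_le_mul_of_nonneg_right hCL (pnorm_nonneg d)
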